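/- For every three-element set S of pairwise noncrossing interior edges of K6, there is at most one interior edge of K6 that crosses all three edges of S. -/

import Mathlib

/-- The cyclic length of the chord joining vertices `a` and `b` of `K₆`,
whose vertices are labeled by `ZMod 6` in cyclic order around a circle. -/
def cycLen (a b : ZMod 6) : ℕ := min (b - a).val (a - b).val

/-- An interior edge of `K₆`: a 2-element set of vertices at cyclic distance at least 2. -/
def InteriorEdge (e : Finset (ZMod 6)) : Prop :=
  e.card = 2 ∧ ∀ a ∈ e, ∀ b ∈ e, a ≠ b → 2 ≤ cycLen a b

/-- A short edge of `K₆`: a 2-element set of vertices at cyclic distance exactly 2. -/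
def ShortEdge (e : Finset (ZMod 6)) : Prop :=
  e.card = 2 ∧ ∀ a ∈ e, ∀ b ∈ e, a ≠ b → cycLen a b = 2

/-- A long edge of `K₆`: a 2-element set of vertices at cyclic distance exactly 3. -/
def LongEdge (e : Finset (ZMod 6)) : Prop :=
  e.card = 2 ∧ ∀ a ∈ e, ∀ b ∈ e, a ≠ b → cycLen a b = 3

/-- `x` lies in the open cyclic arc from `a` to `b` (in the cyclic order of labels). -/
def InArc (a b x : ZMod 6) : Prop := 0 < (x - a).val ∧ (x - a).val < (b - a).val

/-- Two chords `{a,b}` and `{c,d}` cross iff their endpoint sets are disjoint and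
exactly one of `c`, `d` lies in the open cyclic arc from `a` to `b`. -/
def Crosses (e f : Finset (ZMod 6)) : Prop :=
  Disjoint e f ∧ ∃ a b c d : ZMod 6, a ≠ b ∧ c ≠ d ∧ e = {a, b} ∧ f = {c, d} ∧
    Xor' (InArc a b c) (InArc a b d)


instance : DecidablePred InteriorEdge := fun e => by unfold InteriorEdge cycLen; infer_instance
instance (a b x : ZMod 6) : Decidable (InArc a b x) := by unfold InArc; infer_instance
instance (e f : Finset (ZMod 6)) : Decidable (Crosses e f) := by unfold Crosses Xor'; infer_instance

/-- The nine interior edges of `K₆`. -/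
def ied : Fin 9 → Finset (ZMod 6) :=
  ![{0,2},{1,3},{2,4},{3,5},{4,0},{5,1},{0,3},{1,4},{2,5}]

lemma interior_mem : ∀ e : Finset (ZMod 6), InteriorEdge e → ∃ i : Fin 9, e = ied i := by
  decide

set_option synthInstance.maxSize 100000 in
set_option synthInstance.maxHeartbeats 4000000 in
set_option maxHeartbeats 10000000 in
lemma key : ∀ i j : Fin 9, i ≠ j → ¬Crosses (ied i) (ied j) →
    ∀ k : Fin 9, ied i ≠ ied k → ied j ≠ ied k →
    ¬Crosses (ied i) (ied k) → ¬Crosses (ied j) (ied k) →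
    ∀ l : Fin 9, Crosses (ied l) (ied i) → Crosses (ied l) (ied j) → Crosses (ied l) (ied k) →
    ∀ m : Fin 9, Crosses (ied m) (ied i) → Crosses (ied m) (ied j) → Crosses (ied m) (ied k) →
    ied l = ied m := by decide

/-- For every three-element set `S` of pairwise noncrossing interior edges of `K₆`,
there is at most one interior edge of `K₆` crossing all three edges of `S`. -/
theorem stmt_12 (S : Finset (Finset (ZMod 6)))
    (hcard : S.card = 3)
    (hint : ∀ e ∈ S, InteriorEdge e)
    (hnc : ∀ e ∈ S, ∀ f ∈ S, e ≠ f → ¬ Crosses e f) :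
    ∀ f g : Finset (ZMod 6), InteriorEdge f → InteriorEdge g →
      (∀ e ∈ S, Crosses f e) → (∀ e ∈ S, Crosses g e) → f = g := by
  obtain ⟨a, b, c, hab, hac, hbc, rfl⟩ := Finset.card_eq_three.mp hcard
  have ha : a ∈ ({a, b, c} : Finset (Finset (ZMod 6))) := by simp
  have hb : b ∈ ({a, b, c} : Finset (Finset (ZMod 6))) := by simp
  have hc : c ∈ ({a, b, c} : Finset (Finset (ZMod 6))) := by simp
  obtain ⟨i, rfl⟩ := interior_mem a (hint a ha)
  obtain ⟨j, rfl⟩ := interior_mem b (hint b hb)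
  obtain ⟨k, rfl⟩ := interior_mem c (hint c hc)
  intro f g hf hg hfS hgS
  obtain ⟨l, rfl⟩ := interior_mem f hf
  obtain ⟨m, rfl⟩ := interior_mem g hg
  exact key i j (fun h => hab (by rw [h])) (hnc _ ha _ hb hab)
    k hac hbc (hnc _ ha _ hc hac) (hnc _ hb _ hc hbc)
    l (hfS _ ha) (hfS _ hb) (hfS _ hc)
    m (hgS _ ha) (hgS _ hb) (hgS _ hc)
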